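/- Let c > 2 be an integer. Define N(α, c) = (2π^c/(Γ(c/2)²ζ(c))) · ∑_{ℓ ∈ ℤ, |ℓ| ≤ αc} σ_{1−c}(|ℓ|) ∫_{|ℓ|}^{αc} (Δ² − ℓ²)^{c/2−1} dΔ, where σ_{1−c}(0) is interpreted as ζ(c−1) and σ_{1−c}(m) = ∑_{d∣m} d^{1−c} for m > 0. Then for any fixed α with 0 < α < 1/(2πe), N(α, c) → 0 as c → ∞. -/

import Mathlib

open Real Filter

/-- The Riemann zeta value `ζ(s) = ∑_{n ≥ 1} n^{-s}` as a real series. -/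
noncomputable def zetaR (s : ℝ) : ℝ := ∑' n : ℕ, ((n : ℝ) + 1) ^ (-s)

/-- The divisor sum `σ_t(m) = ∑_{d ∣ m} d^t`. -/
noncomputable def sigmaR (t : ℝ) (m : ℕ) : ℝ := ∑ d ∈ m.divisors, (d : ℝ) ^ t

/-- The expected number of non-vacuum primary states with `Δ ≤ αc` in a random
Narain CFT of central charge `c` (Siegel's density). -/
noncomputable def Ncount (α : ℝ) (c : ℕ) : ℝ :=
  (2 * π ^ c / (Real.Gamma ((c : ℝ) / 2) ^ 2 * zetaR c)) *
    ∑ ℓ ∈ Finset.Icc (-⌊α * (c : ℝ)⌋) ⌊α * (c : ℝ)⌋,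
      (if ℓ = 0 then zetaR ((c : ℝ) - 1) else sigmaR (1 - (c : ℝ)) ℓ.natAbs) *
        ∫ Δ in Set.Ioc |(ℓ : ℝ)| (α * (c : ℝ)),
          (Δ ^ 2 - (ℓ : ℝ) ^ 2) ^ ((c : ℝ) / 2 - 1)

section Aux

lemma summable_zetaR {s : ℝ} (hs : 1 < s) : Summable (fun n : ℕ => ((n : ℝ) + 1) ^ (-s)) := by
  have := Real.summable_nat_rpow (p := -s) |>.mpr (by linarith)
  have h2 := (summable_nat_add_iff 1).mpr this
  convert h2 using 2 with n
  · rfl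
  · norm_num

lemma zetaR_nonneg {s : ℝ} : 0 ≤ zetaR s :=
  tsum_nonneg fun n => Real.rpow_nonneg (by positivity) _

lemma one_le_zetaR {s : ℝ} (hs : 1 < s) : 1 ≤ zetaR s := by
  have h := Summable.le_tsum (summable_zetaR hs) 0 (fun n _ => Real.rpow_nonneg (by positivity) _)
  simp at h; exact h

lemma zetaR_le_zetaR_two {s : ℝ} (hs : 2 ≤ s) : zetaR s ≤ zetaR 2 := by
  refine Summable.tsum_le_tsum (fun n => ?_) (summable_zetaR (by linarith)) (summable_zetaR one_lt_two)
  exact Real.rpow_le_rpow_of_exponent_le (by linarith [Nat.cast_nonneg (α := ℝ) n]) (by linarith)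

lemma sigmaR_nonneg (t : ℝ) (m : ℕ) : 0 ≤ sigmaR t m :=
  Finset.sum_nonneg fun d _ => Real.rpow_nonneg (by positivity) _

lemma sigmaR_le (t : ℝ) (ht : t ≤ 0) (m : ℕ) : sigmaR t m ≤ m := by
  calc sigmaR t m ≤ ∑ d ∈ m.divisors, (1:ℝ) := by
        refine Finset.sum_le_sum fun d hd => ?_
        exact Real.rpow_le_one_of_one_le_of_nonpos
          (by exact_mod_cast Nat.pos_of_mem_divisors hd) ht
    _ = m.divisors.card := by simp
    _ ≤ m := by
        have h : m.divisors ⊆ Finset.Icc 1 m := fun d hd =>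
          Finset.mem_Icc.mpr ⟨Nat.pos_of_mem_divisors hd, Nat.divisor_le hd⟩
        exact_mod_cast (by simpa using Finset.card_le_card h : m.divisors.card ≤ m)

open MeasureTheory in
lemma integral_bound (ℓ : ℤ) (c : ℕ) (hc : 4 ≤ c) {x : ℝ} (hx : 0 < x) :
    ∫ Δ in Set.Ioc |(ℓ : ℝ)| x, (Δ ^ 2 - (ℓ : ℝ) ^ 2) ^ ((c : ℝ) / 2 - 1) ≤ x ^ ((c:ℝ) - 1) := by
  set p : ℝ := (c : ℝ) / 2 - 1 with hp
  have hc4 : (4:ℝ) ≤ (c:ℝ) := by exact_mod_cast hc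
  have hp0 : 0 ≤ p := by rw [hp]; linarith
  have hcont : Continuous fun Δ : ℝ => (Δ ^ 2 - (ℓ : ℝ) ^ 2) ^ p :=
    Continuous.rpow_const (by continuity) (fun _ => Or.inr hp0)
  have key : ∀ Δ ∈ Set.Ioc |(ℓ : ℝ)| x, (Δ ^ 2 - (ℓ : ℝ) ^ 2) ^ p ≤ x ^ ((c:ℝ) - 2) := by
    intro Δ hΔ
    obtain ⟨h1, h2⟩ := hΔ
    have habs : (0:ℝ) ≤ |(ℓ:ℝ)| := abs_nonneg _
    have hΔ0 : 0 ≤ Δ := le_of_lt (lt_of_le_of_lt habs h1)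
    have hl2 : (ℓ:ℝ)^2 ≤ Δ^2 := by
      have := sq_abs (ℓ:ℝ)
      nlinarith
    have hle : Δ ^ 2 - (ℓ:ℝ)^2 ≤ x ^ 2 := by nlinarith
    calc (Δ ^ 2 - (ℓ : ℝ) ^ 2) ^ p ≤ (x ^ 2) ^ p :=
          Real.rpow_le_rpow (by linarith) hle hp0
      _ = x ^ ((c:ℝ) - 2) := by
          rw [← Real.rpow_natCast x 2, ← Real.rpow_mul hx.le]
          norm_num [hp]
          ring_nf
  have hvol : (volume (Set.Ioc |(ℓ:ℝ)| x)).toReal ≤ x := by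
    rw [Real.volume_Ioc]
    rcases le_or_gt 0 (x - |(ℓ:ℝ)|) with h | h
    · rw [ENNReal.toReal_ofReal h]
      have := abs_nonneg (ℓ:ℝ); linarith
    · rw [ENNReal.ofReal_of_nonpos h.le]; simpa using hx.le
  calc ∫ Δ in Set.Ioc |(ℓ : ℝ)| x, (Δ ^ 2 - (ℓ : ℝ) ^ 2) ^ p
      ≤ ∫ _ in Set.Ioc |(ℓ : ℝ)| x, x ^ ((c:ℝ) - 2) := by
        refine setIntegral_mono_on (hcont.integrableOn_Ioc) ((integrableOn_const_iff (by finiteness)).mpr ?_)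
          measurableSet_Ioc key
        right; exact measure_Ioc_lt_top
    _ = (volume (Set.Ioc |(ℓ:ℝ)| x)).toReal * x ^ ((c:ℝ) - 2) := by
        rw [setIntegral_const, smul_eq_mul, Measure.real]
    _ ≤ x * x ^ ((c:ℝ) - 2) := by
        gcongr
    _ = x ^ ((c:ℝ) - 1) := by
        nth_rewrite 1 [← Real.rpow_one x]
        rw [← Real.rpow_add hx]
        ring_nf

lemma Gamma_sq_lower (c : ℕ) (hc : 4 ≤ c) :
    ((c-1).factorial : ℝ) * ((2:ℝ) ^ (c-1))⁻¹ * √π * (2 / c) ≤ Real.Gamma ((c:ℝ)/2) ^ 2 := by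
  have hc4 : (4:ℝ) ≤ (c:ℝ) := by exact_mod_cast hc
  set s : ℝ := (c:ℝ)/2 with hs
  have hs0 : 0 < s := by rw [hs]; linarith
  have hdup := Real.Gamma_mul_Gamma_add_half s
  have h2s : 2 * s = (c:ℝ) := by rw [hs]; ring
  have hGc : Real.Gamma ((c:ℝ)) = ((c-1).factorial : ℝ) := by
    have h1 : ((c-1:ℕ):ℝ) + 1 = (c:ℝ) := by
      have : 1 ≤ c := by omega
      push_cast [Nat.cast_sub this]; ring
    rw [← h1, Real.Gamma_nat_eq_factorial]
  have hpow : (2:ℝ) ^ (1 - (c:ℝ)) = ((2:ℝ) ^ (c-1))⁻¹ := by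
    rw [show (1 - (c:ℝ)) = -((c:ℝ)-1) by ring, Real.rpow_neg (by norm_num),
      show ((c:ℝ) - 1) = ((c-1:ℕ):ℝ) by push_cast [Nat.cast_sub (show 1 ≤ c by omega)]; ring,
      Real.rpow_natCast]
  have hmono : Real.Gamma (s + 1/2) ≤ Real.Gamma (s + 1) := by
    refine Real.Gamma_strictMonoOn_Ici.monotoneOn ?_ ?_ (by linarith)
    · simp only [Set.mem_Ici]; linarith
    · simp only [Set.mem_Ici]; linarith
  have hadd : Real.Gamma (s + 1) = s * Real.Gamma s := Real.Gamma_add_one hs0.ne'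
  have hGs : 0 < Real.Gamma s := Real.Gamma_pos_of_pos hs0
  have hkey : ((c-1).factorial : ℝ) * ((2:ℝ) ^ (c-1))⁻¹ * √π ≤ s * Real.Gamma s ^ 2 := by
    calc ((c-1).factorial : ℝ) * ((2:ℝ) ^ (c-1))⁻¹ * √π
        = Real.Gamma s * Real.Gamma (s + 1/2) := by rw [hdup, h2s, hGc, hpow]
      _ ≤ Real.Gamma s * (s * Real.Gamma s) := by
          rw [← hadd]; exact mul_le_mul_of_nonneg_left hmono hGs.le
      _ = s * Real.Gamma s ^ 2 := by ring
  have h2c : (2:ℝ)/c = s⁻¹ := by rw [hs]; field_simp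
  rw [h2c]
  rw [mul_inv_le_iff₀ hs0, mul_comm (Real.Gamma s ^ 2) s]
  exact hkey

lemma fact_lower (m : ℕ) : ((m:ℝ)) ^ m ≤ Real.exp 1 ^ m * (m.factorial : ℝ) := by
  have h := Real.pow_div_factorial_le_exp (x := (m:ℝ)) (Nat.cast_nonneg m) m
  have hf : (0:ℝ) < (m.factorial : ℝ) := by exact_mod_cast m.factorial_pos
  rw [div_le_iff₀ hf] at h
  calc ((m:ℝ)) ^ m ≤ Real.exp (m:ℝ) * m.factorial := h
    _ = Real.exp 1 ^ m * m.factorial := by rw [← Real.exp_nat_mul]; norm_num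

lemma succ_pow_le (m : ℕ) (hm : 0 < m) : ((m:ℝ) + 1) ^ m ≤ Real.exp 1 * (m:ℝ) ^ m := by
  have hm0 : (0:ℝ) < m := by exact_mod_cast hm
  have h1 : ((m:ℝ) + 1) = (m:ℝ) * (1 + 1/(m:ℝ)) := by field_simp
  have h2 : (1 + 1/(m:ℝ)) ^ m ≤ Real.exp 1 := by
    calc (1 + 1/(m:ℝ)) ^ m ≤ Real.exp (1/(m:ℝ)) ^ m := by
          gcongr
          linarith [Real.add_one_le_exp (1/(m:ℝ))]
      _ = Real.exp ((m:ℝ) * (1/(m:ℝ))) := by rw [Real.exp_nat_mul]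
      _ = Real.exp 1 := by rw [mul_one_div, div_self hm0.ne']
  calc ((m:ℝ) + 1) ^ m = (m:ℝ) ^ m * (1 + 1/(m:ℝ)) ^ m := by rw [h1, mul_pow]
    _ ≤ (m:ℝ) ^ m * Real.exp 1 := by
        gcongr
    _ = Real.exp 1 * (m:ℝ) ^ m := by ring

lemma combo (α : ℝ) (h0 : 0 < α) (c : ℕ) (hc : 4 ≤ c) :
    π ^ c * 2 ^ (c-1) * (α * c) ^ (c-1) / ((c-1).factorial : ℝ) ≤
      π * Real.exp 1 * (2 * π * Real.exp 1 * α) ^ (c-1) := by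
  set m := c - 1 with hm
  have hcm : c = m + 1 := by omega
  have hmpos : 0 < m := by omega
  have hfpos : (0:ℝ) < (m.factorial : ℝ) := by exact_mod_cast m.factorial_pos
  have hcast : (c:ℝ) = (m:ℝ) + 1 := by rw [hcm]; push_cast; ring
  have key : (α * c) ^ m ≤ α ^ m * (Real.exp 1 * ((m:ℝ))^m) := by
    rw [mul_pow]
    gcongr
    rw [hcast]; exact succ_pow_le m hmpos
  have step : (α * c) ^ m / (m.factorial : ℝ) ≤ α ^ m * Real.exp 1 * Real.exp 1 ^ m := by
    rw [div_le_iff₀ hfpos]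
    calc (α * (c:ℝ)) ^ m ≤ α ^ m * (Real.exp 1 * ((m:ℝ))^m) := key
      _ ≤ α ^ m * (Real.exp 1 * (Real.exp 1 ^ m * m.factorial)) := by
          gcongr
          exact fact_lower m
      _ = α ^ m * Real.exp 1 * Real.exp 1 ^ m * m.factorial := by ring
  calc π ^ c * 2 ^ m * (α * c) ^ m / (m.factorial : ℝ)
      = π * π ^ m * 2 ^ m * ((α * c) ^ m / (m.factorial : ℝ)) := by
        rw [hcm, pow_succ]; ring
    _ ≤ π * π ^ m * 2 ^ m * (α ^ m * Real.exp 1 * Real.exp 1 ^ m) := by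
        gcongr
    _ = π * Real.exp 1 * (2 * π * Real.exp 1 * α) ^ m := by
        rw [mul_pow, mul_pow, mul_pow]; ring

open MeasureTheory in
lemma integral_nonneg' (ℓ : ℤ) (c : ℕ) (x : ℝ) :
    0 ≤ ∫ Δ in Set.Ioc |(ℓ : ℝ)| x, (Δ ^ 2 - (ℓ : ℝ) ^ 2) ^ ((c : ℝ) / 2 - 1) := by
  refine setIntegral_nonneg measurableSet_Ioc fun Δ hΔ => ?_
  refine Real.rpow_nonneg ?_ _
  have h1 := hΔ.1
  have habs : (0:ℝ) ≤ |(ℓ:ℝ)| := abs_nonneg _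
  have := sq_abs (ℓ:ℝ)
  nlinarith

lemma coeff_nonneg (c : ℕ) (ℓ : ℤ) :
    0 ≤ (if ℓ = 0 then zetaR ((c : ℝ) - 1) else sigmaR (1 - (c : ℝ)) ℓ.natAbs) := by
  split
  · exact zetaR_nonneg
  · exact sigmaR_nonneg _ _

lemma Ncount_nonneg (α : ℝ) (c : ℕ) (hc : 4 ≤ c) : 0 ≤ Ncount α c := by
  have hc4 : (4:ℝ) ≤ (c:ℝ) := by exact_mod_cast hc
  have hΓ : 0 < Real.Gamma ((c:ℝ)/2) := Real.Gamma_pos_of_pos (by linarith)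
  have hζ : (0:ℝ) < zetaR c := lt_of_lt_of_le one_pos (one_le_zetaR (by linarith))
  refine mul_nonneg (by positivity) (Finset.sum_nonneg fun ℓ _ => ?_)
  exact mul_nonneg (coeff_nonneg c ℓ) (integral_nonneg' ℓ c _)

lemma Ncount_le (α : ℝ) (h0 : 0 < α) (c : ℕ) (hc : 4 ≤ c) :
    Ncount α c ≤ ((2*α+1) * (zetaR 2 + α) / √π * (π * Real.exp 1)) *
      ((c:ℝ)^3 * (2 * π * Real.exp 1 * α) ^ (c-1)) := by
  have hc4 : (4:ℝ) ≤ (c:ℝ) := by exact_mod_cast hc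
  have hΓ : 0 < Real.Gamma ((c:ℝ)/2) := Real.Gamma_pos_of_pos (by linarith)
  have hζ : (1:ℝ) ≤ zetaR c := one_le_zetaR (by linarith)
  have hx : 0 < α * c := by positivity
  set x := α * (c:ℝ) with hxdef
  set L := ⌊α * (c:ℝ)⌋ with hL
  have hL0 : 0 ≤ L := Int.floor_nonneg.mpr hx.le
  have hLle : (L:ℝ) ≤ x := Int.floor_le _
  have hz2 : (0:ℝ) ≤ zetaR 2 := zetaR_nonneg
  set D := zetaR 2 + α with hD
  have hD0 : 0 ≤ D := by positivity
  set B : ℝ := (D * c) * x ^ (c-1) with hB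
  have hB0 : 0 ≤ B := by positivity
  have hxpow : x ^ ((c:ℝ) - 1) = x ^ (c-1 : ℕ) := by
    rw [← Real.rpow_natCast x (c-1)]
    congr 1
    push_cast [Nat.cast_sub (show 1 ≤ c by omega)]
    ring
  have hsummand : ∀ ℓ ∈ Finset.Icc (-L) L,
      (if ℓ = 0 then zetaR ((c : ℝ) - 1) else sigmaR (1 - (c : ℝ)) ℓ.natAbs) *
        (∫ Δ in Set.Ioc |(ℓ : ℝ)| x, (Δ ^ 2 - (ℓ : ℝ) ^ 2) ^ ((c : ℝ) / 2 - 1)) ≤ B := by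
    intro ℓ hℓ
    have hint := integral_bound ℓ c hc hx
    rw [hxpow] at hint
    have hcoeff : (if ℓ = 0 then zetaR ((c : ℝ) - 1) else sigmaR (1 - (c : ℝ)) ℓ.natAbs)
        ≤ D * c := by
      split
      · calc zetaR ((c:ℝ) - 1) ≤ zetaR 2 := zetaR_le_zetaR_two (by linarith)
          _ ≤ D * c := by rw [hD]; nlinarith
      · calc sigmaR (1 - (c:ℝ)) ℓ.natAbs ≤ (ℓ.natAbs : ℝ) := sigmaR_le _ (by linarith) _
          _ ≤ (L : ℝ) := by
              rw [Finset.mem_Icc] at hℓ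
              have h3 : (ℓ.natAbs : ℤ) ≤ L := by omega
              have h4 := (Int.cast_le (R := ℝ)).mpr h3
              rw [Nat.cast_natAbs]
              simpa using h4
          _ ≤ D * c := by rw [hD]; nlinarith
    exact mul_le_mul hcoeff hint (integral_nonneg' ℓ c x) (by positivity)
  have hsum : (∑ ℓ ∈ Finset.Icc (-L) L,
      (if ℓ = 0 then zetaR ((c : ℝ) - 1) else sigmaR (1 - (c : ℝ)) ℓ.natAbs) *
        ∫ Δ in Set.Ioc |(ℓ : ℝ)| x, (Δ ^ 2 - (ℓ : ℝ) ^ 2) ^ ((c : ℝ) / 2 - 1)) ≤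
      ((2*α+1) * c) * B := by
    calc _ ≤ (Finset.Icc (-L) L).card • B := Finset.sum_le_card_nsmul _ _ B hsummand
      _ = ((Finset.Icc (-L) L).card : ℝ) * B := by rw [nsmul_eq_mul]
      _ ≤ ((2*α+1) * c) * B := by
          refine mul_le_mul_of_nonneg_right ?_ hB0
          have hcard : ((Finset.Icc (-L) L).card : ℝ) = 2*(L:ℝ)+1 := by
            rw [Int.card_Icc]
            have h1 : (L + 1 - -L).toNat = 2*L.toNat+1 := by omega
            rw [h1]
            have h2 : (L.toNat : ℝ) = (L : ℝ) := by exact_mod_cast Int.toNat_of_nonneg hL0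
            push_cast
            rw [h2]
          rw [hcard]
          have h5 : (1:ℝ) ≤ c := by linarith
          have h6 : (L:ℝ) ≤ α * c := hLle
          nlinarith
  set G : ℝ := ((c-1).factorial : ℝ) * ((2:ℝ) ^ (c-1))⁻¹ * √π * (2 / c) with hG
  have hGpos : 0 < G := by
    have := Nat.factorial_pos (c-1)
    have hπ := Real.sqrt_pos.mpr Real.pi_pos
    positivity
  have hA : 2 * π ^ c / (Real.Gamma ((c:ℝ)/2) ^ 2 * zetaR c) ≤ 2 * π ^ c / G := by
    refine div_le_div_of_nonneg_left (by positivity) hGpos ?_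
    calc G ≤ Real.Gamma ((c:ℝ)/2) ^ 2 := Gamma_sq_lower c hc
      _ ≤ Real.Gamma ((c:ℝ)/2) ^ 2 * zetaR c := le_mul_of_one_le_right (by positivity) hζ
  have hfinal : Ncount α c ≤ (2 * π ^ c / G) * (((2*α+1) * c) * B) := by
    rw [Ncount]
    refine mul_le_mul hA hsum ?_ (by positivity)
    refine Finset.sum_nonneg fun ℓ _ => mul_nonneg (coeff_nonneg c ℓ) (integral_nonneg' ℓ c _)
  refine hfinal.trans ?_
  have heq : (2 * π ^ c / G) * (((2*α+1) * c) * B) =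
      ((2*α+1) * D / √π) * (c:ℝ)^3 *
        (π ^ c * 2 ^ (c-1) * x ^ (c-1) / ((c-1).factorial : ℝ)) := by
    rw [hG, hB]
    have hπ : (0:ℝ) < √π := Real.sqrt_pos.mpr Real.pi_pos
    have hf : (0:ℝ) < ((c-1).factorial : ℝ) := by exact_mod_cast Nat.factorial_pos _
    have hc0 : (0:ℝ) < (c:ℝ) := by linarith
    field_simp
  rw [heq]
  calc ((2*α+1) * D / √π) * (c:ℝ)^3 * (π ^ c * 2 ^ (c-1) * x ^ (c-1) / ((c-1).factorial : ℝ))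
      ≤ ((2*α+1) * D / √π) * (c:ℝ)^3 * (π * Real.exp 1 * (2 * π * Real.exp 1 * α) ^ (c-1)) := by
        have hπ : (0:ℝ) < √π := Real.sqrt_pos.mpr Real.pi_pos
        refine mul_le_mul_of_nonneg_left (combo α h0 c hc) (by positivity)
    _ = ((2*α+1) * D / √π * (π * Real.exp 1)) * ((c:ℝ)^3 * (2 * π * Real.exp 1 * α) ^ (c-1)) := by
        ring

end Aux

theorem stmt18 (α : ℝ) (h0 : 0 < α) (hα : α < 1 / (2 * π * Real.exp 1)) :
    Tendsto (fun c : ℕ => Ncount α c) atTop (nhds 0) := by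
  have hπe : (0:ℝ) < 2 * π * Real.exp 1 := by positivity
  have hβ0 : (0:ℝ) < 2 * π * Real.exp 1 * α := by positivity
  have hβ1 : 2 * π * Real.exp 1 * α < 1 := by
    calc 2 * π * Real.exp 1 * α < 2 * π * Real.exp 1 * (1 / (2 * π * Real.exp 1)) :=
          mul_lt_mul_of_pos_left hα hπe
      _ = 1 := by field_simp
  have hKβ : Tendsto (fun c : ℕ =>
      (((2*α+1) * (zetaR 2 + α) / √π * (π * Real.exp 1)) / (2 * π * Real.exp 1 * α)) *
        ((c:ℝ)^3 * (2 * π * Real.exp 1 * α)^c)) atTop (nhds 0) := by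
    have h := (tendsto_pow_const_mul_const_pow_of_lt_one 3 hβ0.le hβ1).const_mul
      (((2*α+1) * (zetaR 2 + α) / √π * (π * Real.exp 1)) / (2 * π * Real.exp 1 * α))
    simpa using h
  refine tendsto_of_tendsto_of_tendsto_of_le_of_le' tendsto_const_nhds hKβ ?_ ?_
  · filter_upwards [eventually_ge_atTop 4] with c hc
    exact Ncount_nonneg α c hc
  · filter_upwards [eventually_ge_atTop 4] with c hc
    refine (Ncount_le α h0 c hc).trans (le_of_eq ?_)
    have hpow : (2 * π * Real.exp 1 * α) ^ c = (2 * π * Real.exp 1 * α) ^ (c-1) *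
        (2 * π * Real.exp 1 * α) := by
      rw [← pow_succ]
      congr 1
      omega
    rw [hpow]
    field_simp
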